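/- Let D ⊆ ℝ² be compact and f : [0,1] × [0,1] → D continuous. For t ∈ [0,1] define the contaminated region C(t) = {x ∈ D : there exists continuous γ : [0,t] → D with γ(t) = x and γ(t') ∉ f([0,1] × {t'}) for all t' ∈ [0,t]}. Then C(t) is open in D (and its complement U(t) = D \ C(t) is closed in D). -/

import Mathlib

open Set

/-- A set `C ⊆ D` such that every point of `C` has a metric ball whose
intersection with `D` lies in `C` is relatively open in `D`. -/
private lemma relOpen_of_local {C D : Set ℂ}
    (hCD : C ⊆ D)
    (h : ∀ x ∈ C, ∃ ρ > (0:ℝ), ∀ y ∈ D, dist y x < ρ → y ∈ C) :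
    ∃ V : Set ℂ, IsOpen V ∧ C = V ∩ D := by
  refine ⟨{z : ℂ | ∃ x ∈ C, ∃ ρ : ℝ, 0 < ρ ∧ (∀ y ∈ D, dist y x < ρ → y ∈ C) ∧ dist z x < ρ},
    ?_, ?_⟩
  · rw [Metric.isOpen_iff]
    rintro z ⟨x, hxC, ρ, hρ, hgood, hzx⟩
    refine ⟨ρ - dist z x, by linarith, fun z' hz' => ?_⟩
    rw [Metric.mem_ball] at hz'
    exact ⟨x, hxC, ρ, hρ, hgood, by
      have := dist_triangle z' z x
      linarith⟩
  · ext z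
    simp only [mem_inter_iff, mem_setOf_eq]
    constructor
    · intro hz
      obtain ⟨ρ, hρ, hgood⟩ := h z hz
      exact ⟨⟨z, hz, ρ, hρ, hgood, by simpa using hρ⟩, hCD hz⟩
    · rintro ⟨⟨x, hxC, ρ, hρ, hgood, hzx⟩, hzD⟩
      exact hgood z hzD hzx

/-- The contaminated region `C(t)` (points reachable by paths avoiding the
sensor images at all times up to `t`) is open in `D`. -/
theorem stmt10 (D : Set ℂ) (hD : IsCompact D) (f : ℝ → ℝ → ℂ)
    (hf : ContinuousOn (fun q : ℝ × ℝ => f q.1 q.2) (Icc 0 1 ×ˢ Icc 0 1))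
    (hfD : ∀ s ∈ Icc (0:ℝ) 1, ∀ t ∈ Icc (0:ℝ) 1, f s t ∈ D)
    (t : ℝ) (ht : t ∈ Icc (0:ℝ) 1) :
    ∃ V : Set ℂ, IsOpen V ∧
      {x ∈ D | ∃ γ : ℝ → ℂ, ContinuousOn γ (Icc 0 t) ∧ (∀ t' ∈ Icc 0 t, γ t' ∈ D) ∧
        γ t = x ∧ ∀ t' ∈ Icc 0 t, γ t' ∉ (fun s => f s t') '' Icc 0 1} = V ∩ D := by
  classical
  have ht0 : (0:ℝ) ≤ t := ht.1
  have ht1 : t ≤ 1 := ht.2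
  set g : ℝ × ℝ → ℂ := fun q => f q.1 q.2 with hgdef
  set Q : Set (ℝ × ℝ) := Icc 0 1 ×ˢ Icc 0 1 with hQdef
  have hQc : IsCompact Q := isCompact_Icc.prod isCompact_Icc
  have hgc : ContinuousOn g Q := hf
  have hSc : IsCompact (g '' Q) := hQc.image_of_continuousOn hgc
  refine relOpen_of_local (fun x hx => hx.1) ?_
  intro x hx
  obtain ⟨hxD, γ, hγcont, hγD, hγt, hγav⟩ := hx
  -- the space-time graph of γ and the space-time covered set are compact and disjoint
  have hsubQ : Icc (0:ℝ) 1 ×ˢ Icc 0 t ⊆ Q := prod_mono_right (Icc_subset_Icc le_rfl ht1)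
  set G : Set (ℝ × ℂ) := (fun a => (a, γ a)) '' Icc 0 t with hGdef
  set K : Set (ℝ × ℂ) := (fun p : ℝ × ℝ => (p.2, g p)) '' (Icc 0 1 ×ˢ Icc 0 t) with hKdef
  have hGc : IsCompact G := isCompact_Icc.image_of_continuousOn (continuousOn_id.prodMk hγcont)
  have hKc : IsCompact K := (isCompact_Icc.prod isCompact_Icc).image_of_continuousOn
      ((continuous_snd.continuousOn).prodMk (hgc.mono hsubQ))
  have hGne : G.Nonempty := ⟨(0, γ 0), ⟨0, ⟨le_rfl, ht0⟩, rfl⟩⟩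
  have hKne : K.Nonempty := ⟨(0, g (0, 0)), ⟨(0, 0), ⟨⟨le_rfl, zero_le_one⟩, ⟨le_rfl, ht0⟩⟩, rfl⟩⟩
  obtain ⟨ab, habmem, hminon⟩ := (hGc.prod hKc).exists_isMinOn (hGne.prod hKne)
      (continuous_dist.continuousOn)
  set m := dist ab.1 ab.2 with hmdef
  have hm0 : 0 < m := by
    rw [hmdef, dist_pos]
    obtain ⟨hab1, hab2⟩ := habmem
    obtain ⟨a0, ha0, ha0e⟩ := hab1
    obtain ⟨p0, hp0, hp0e⟩ := hab2
    intro heq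
    rw [← ha0e, ← hp0e] at heq
    have h1 : a0 = p0.2 := congrArg Prod.fst heq
    have h2 : γ a0 = g p0 := congrArg Prod.snd heq
    simp only [hgdef] at h2
    refine hγav a0 ha0 ⟨p0.1, hp0.1, ?_⟩
    show f p0.1 a0 = γ a0
    rw [h2, h1]
  have hm : ∀ w ∈ Icc 0 t, ∀ s ∈ Icc (0:ℝ) 1, ∀ a ∈ Icc 0 t,
      |w - a| < m → m ≤ dist (γ w) (f s a) := by
    intro w hw s hs a ha hlt
    have hmem : ((w, γ w), (a, f s a)) ∈ G ×ˢ K :=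
      ⟨⟨w, hw, rfl⟩, ⟨(s, a), ⟨hs, ha⟩, rfl⟩⟩
    have hle : m ≤ dist ((w, γ w) : ℝ × ℂ) ((a, f s a) : ℝ × ℂ) :=
      isMinOn_iff.mp hminon _ hmem
    simp only [Prod.dist_eq] at hle
    rcases le_max_iff.mp hle with h | h
    · rw [Real.dist_eq] at h; linarith
    · exact h
  rcases eq_or_lt_of_le ht0 with hteq | htpos
  · -- case t = 0 : constant paths suffice
    refine ⟨m, hm0, ?_⟩
    intro y hyD hyx
    refine ⟨hyD, fun _ => y, continuous_const.continuousOn, fun _ _ => hyD, rfl, ?_⟩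
    rintro a ha ⟨s, hs, hfs⟩
    have hfs' : f s a = y := hfs
    have hat : a = t := le_antisymm ha.2 (hteq ▸ ha.1)
    have hd := hm t ⟨ht0, le_rfl⟩ s hs a ha (by rw [hat]; simpa using hm0)
    rw [hγt, hfs'] at hd
    rw [dist_comm] at hyx
    linarith
  · -- case 0 < t
    set δ := min m t / 2 with hδdef
    have hmt0 : 0 < min m t := lt_min hm0 htpos
    have hδ0 : 0 < δ := by rw [hδdef]; linarith
    have hδm : δ < m := by
      have h1 : min m t ≤ m := min_le_left _ _
      rw [hδdef]; linarith
    have hδt : δ < t := by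
      have h1 : min m t ≤ t := min_le_right _ _
      rw [hδdef]; linarith
    have hT10 : 0 ≤ t - δ := by linarith
    -- uniform continuity of g on Q
    have huc := hQc.uniformContinuousOn_of_continuous hgc
    rw [Metric.uniformContinuousOn_iff] at huc
    obtain ⟨r, hr0, hruc⟩ := huc m hm0
    by_cases hxS : x ∈ g '' Q
    · -- x lies in the total sensor image Σ = g '' Q
      set Z : Set (ℝ × ℝ) := {p | p ∈ Q ∧ g p = x} with hZdef
      set A : Set (ℝ × ℝ) := Q ∩ ⋂ q ∈ Z, {p | r ≤ dist p q} with hAdef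
      have hAc : IsCompact A := hQc.inter_right
        (isClosed_biInter fun q _ => isClosed_le continuous_const
          (continuous_id.dist continuous_const))
      have hMc : IsCompact (g '' A) :=
        hAc.image_of_continuousOn (hgc.mono inter_subset_left)
      have hxM : x ∉ g '' A := by
        rintro ⟨p, ⟨hpQ, hpI⟩, hpx⟩
        have hple : r ≤ dist p p := mem_iInter₂.mp hpI p ⟨hpQ, hpx⟩
        rw [dist_self] at hple
        linarith
      obtain ⟨ρ, hρ0, hball⟩ := Metric.isOpen_iff.mp hMc.isClosed.isOpen_compl x hxM
      refine ⟨ρ, hρ0, ?_⟩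
      intro y hyD hyx
      by_cases hyS : y ∈ g '' Q
      · -- y is in Σ : construct an explicit evasion path to y
        obtain ⟨p', hp'Q, hp'y⟩ := hyS
        have hp'A : p' ∉ A := fun hA => (hball (Metric.mem_ball.mpr hyx)) ⟨p', hA, hp'y⟩
        have hqex : ∃ q ∈ Z, dist p' q < r := by
          by_contra hno
          push_neg at hno
          exact hp'A ⟨hp'Q, mem_iInter₂.mpr fun q hq => hno q hq⟩
        obtain ⟨q, hqZ, hqr⟩ := hqex
        have hqQ : q ∈ Q := hqZ.1
        have hgq : g q = x := hqZ.2
        set c : ℝ → ℝ × ℝ := fun u => q + u • (p' - q) with hcdef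
        have hcQ : ∀ u ∈ Icc (0:ℝ) 1, c u ∈ Q := fun u hu =>
          ((convex_Icc (0:ℝ) 1).prod (convex_Icc (0:ℝ) 1)).add_smul_sub_mem hqQ hp'Q hu
        have hcr : ∀ u ∈ Icc (0:ℝ) 1, dist (c u) q < r := by
          intro u hu
          have he : c u - q = u • (p' - q) := by rw [hcdef]; simp
          rw [dist_eq_norm, he, norm_smul, Real.norm_eq_abs, abs_of_nonneg hu.1]
          calc u * ‖p' - q‖ ≤ 1 * ‖p' - q‖ :=
                mul_le_mul_of_nonneg_right hu.2 (norm_nonneg _)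
            _ = dist p' q := by rw [one_mul, dist_eq_norm]
            _ < r := hqr
        have hgcm : ∀ u ∈ Icc (0:ℝ) 1, dist (g (c u)) x < m := by
          intro u hu
          rw [← hgq]
          exact hruc _ (hcQ u hu) q hqQ (hcr u hu)
        -- the three pieces of the path
        set T1 := t - δ with hT1
        set T2 := t - δ/2 with hT2
        have hT1T2 : T1 ≤ T2 := by rw [hT1, hT2]; linarith
        have hT2t : T2 < t := by rw [hT2]; linarith
        have hT1t : T1 ≤ t := by rw [hT1]; linarith
        set P1 : ℝ → ℂ := fun a => γ (max 0 (min a T1)) with hP1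
        set P2 : ℝ → ℂ := fun a => γ (max T1 (min t (2*a - t + δ))) with hP2
        set P3 : ℝ → ℂ := fun a => g (c (max 0 (min 1 ((a - T2)/(δ/2))))) with hP3
        have hmem1 : ∀ a : ℝ, max 0 (min a T1) ∈ Icc 0 t := fun a =>
          ⟨le_max_left _ _, max_le ht0 ((min_le_right _ _).trans hT1t)⟩
        have hmem2 : ∀ a : ℝ, max T1 (min t (2*a - t + δ)) ∈ Icc 0 t := fun a =>
          ⟨hT10.trans (le_max_left _ _), max_le hT1t (min_le_left _ _)⟩
        have hmem3 : ∀ a : ℝ, max 0 (min 1 ((a - T2)/(δ/2))) ∈ Icc (0:ℝ) 1 := fun a =>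
          ⟨le_max_left _ _, max_le zero_le_one (min_le_left _ _)⟩
        have hP1c : Continuous P1 := by
          rw [hP1]
          exact hγcont.comp_continuous
            (continuous_const.max (continuous_id.min continuous_const)) hmem1
        have hP2c : Continuous P2 := by
          rw [hP2]
          refine hγcont.comp_continuous ?_ hmem2
          exact continuous_const.max (continuous_const.min
            (((continuous_const.mul continuous_id).sub continuous_const).add continuous_const))
        have hP3c : Continuous P3 := by
          rw [hP3]
          refine hgc.comp_continuous ?_ (fun a => hcQ _ (hmem3 a))
          refine (Continuous.comp ?_ ?_ : Continuous (c ∘ fun a => max 0 (min 1 ((a - T2)/(δ/2)))))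
          · rw [hcdef]; exact continuous_const.add (continuous_id.smul continuous_const)
          · exact continuous_const.max (continuous_const.min
              ((continuous_id.sub continuous_const).div_const _))
        have hP1T1 : P1 T1 = γ T1 := by
          simp only [hP1, min_self, max_eq_right hT10]
        have hP2T1 : P2 T1 = γ T1 := by
          have he : 2*T1 - t + δ = T1 := by rw [hT1]; ring
          simp only [hP2, he, min_eq_right hT1t, max_self]
        have hP2T2 : P2 T2 = x := by
          have he : 2*T2 - t + δ = t := by rw [hT2]; ring
          simp only [hP2, he, min_self, max_eq_right hT1t, hγt]
        have hP3T2 : P3 T2 = x := by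
          have he : (T2 - T2)/(δ/2) = 0 := by rw [sub_self, zero_div]
          have h2 : c 0 = q := by rw [hcdef]; simp
          simp only [hP3, he, min_eq_right (zero_le_one (α := ℝ)), max_self, h2, hgq]
        set η : ℝ → ℂ := fun a => if a ≤ T1 then P1 a else if a ≤ T2 then P2 a else P3 a
          with hηdef
        have hηc : Continuous η := by
          rw [hηdef]
          refine Continuous.if_le ?_ ?_ continuous_id continuous_const ?_
          · exact hP1c
          · refine Continuous.if_le hP2c hP3c continuous_id continuous_const ?_
            intro a haeq
            rw [haeq, hP2T2, hP3T2]
          · intro a haeq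
            rw [haeq, if_pos hT1T2, hP1T1, hP2T1]
        refine ⟨hyD, η, hηc.continuousOn, ?_, ?_, ?_⟩
        · -- η stays in D
          intro a _
          rw [hηdef]
          show (if a ≤ T1 then P1 a else if a ≤ T2 then P2 a else P3 a) ∈ D
          split_ifs with h1 h2
          · exact hγD _ (hmem1 a)
          · exact hγD _ (hmem2 a)
          · have hcmem := hcQ _ (hmem3 a)
            rw [hQdef, mem_prod] at hcmem
            simp only [hP3]
            exact hfD _ hcmem.1 _ hcmem.2
        · -- η ends at y
          rw [hηdef]
          show (if t ≤ T1 then P1 t else if t ≤ T2 then P2 t else P3 t) = y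
          rw [if_neg (by rw [hT1]; intro h; linarith : ¬ t ≤ T1),
              if_neg (not_le.mpr hT2t)]
          have h1 : (t - T2)/(δ/2) = 1 := by
            rw [hT2]
            field_simp
            ring
          have h4 : c 1 = p' := by rw [hcdef]; simp
          simp only [hP3, h1, min_self, max_eq_right (zero_le_one (α := ℝ)), h4, hp'y]
        · -- η avoids the sensor at all times
          rintro a ha ⟨s, hs, hfs⟩
          replace hfs : f s a = η a := hfs
          rw [hηdef] at hfs
          replace hfs : f s a = (if a ≤ T1 then P1 a else if a ≤ T2 then P2 a else P3 a) := hfs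
          by_cases h1 : a ≤ T1
          · rw [if_pos h1] at hfs
            have hval : P1 a = γ a := by
              simp only [hP1, min_eq_left h1, max_eq_right ha.1]
            rw [hval] at hfs
            exact hγav a ha ⟨s, hs, hfs⟩
          · by_cases h2 : a ≤ T2
            · rw [if_neg h1, if_pos h2] at hfs
              have hT1a : T1 ≤ a := (not_le.mp h1).le
              have hw1 : T1 ≤ 2*a - t + δ := by rw [hT1] at hT1a ⊢; linarith
              have hw2 : 2*a - t + δ ≤ t := by rw [hT2] at h2; linarith
              have hval : P2 a = γ (2*a - t + δ) := by
                simp only [hP2, min_eq_right hw2, max_eq_right hw1]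
              rw [hval] at hfs
              have hwI : (2*a - t + δ) ∈ Icc 0 t := ⟨hT10.trans hw1, hw2⟩
              have habs : |(2*a - t + δ) - a| < m := by
                have he : (2*a - t + δ) - a = a - t + δ := by ring
                rw [he, abs_of_nonneg (by rw [hT1] at hT1a; linarith)]
                rw [hT2] at h2
                linarith
              have hd := hm _ hwI s hs a ha habs
              rw [← hfs] at hd
              rw [dist_self] at hd
              linarith
            · rw [if_neg h1, if_neg h2] at hfs
              have hd1 := hm t ⟨ht0, le_rfl⟩ s hs a ha (by
                rw [abs_of_nonneg (by linarith [ha.2])]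
                rw [hT2] at h2
                push_neg at h2
                linarith)
              rw [hγt] at hd1
              have hd2 := hgcm _ (hmem3 a)
              simp only [hP3] at hfs
              rw [← hfs] at hd2
              rw [dist_comm] at hd2
              linarith
      · -- y is not in Σ : the constant path at y is an evasion path
        refine ⟨hyD, fun _ => y, continuous_const.continuousOn, fun _ _ => hyD, rfl, ?_⟩
        rintro a ha ⟨s, hs, hfs⟩
        exact hyS ⟨(s, a), ⟨hs, ⟨ha.1, ha.2.trans ht1⟩⟩, hfs⟩
    · -- x is not in Σ : points near x are not in Σ, constant paths work
      obtain ⟨ρ, hρ0, hball⟩ := Metric.isOpen_iff.mp hSc.isClosed.isOpen_compl x hxS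
      refine ⟨ρ, hρ0, ?_⟩
      intro y hyD hyx
      refine ⟨hyD, fun _ => y, continuous_const.continuousOn, fun _ _ => hyD, rfl, ?_⟩
      rintro a ha ⟨s, hs, hfs⟩
      exact (hball (Metric.mem_ball.mpr hyx)) ⟨(s, a), ⟨hs, ⟨ha.1, ha.2.trans ht1⟩⟩, hfs⟩
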